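/- With the notation of the previous context (α*_i defined recursively from α_i, g_{ij}, |T_i|/n_i), define for 1 ≤ j ≤ m−1: f(j) = ∑_{i=1}^{j} [ |T_i|/n_i + (1 − |T_i|/n_i)(∑_{l=j+1}^m g_{il}) ] α*_i + ∑_{l=j+1}^{m} [ |T_l|/n_l + (1 − |T_l|/n_l)(∑_{i=j+1}^m g_{li}) ] α_l. Then f(j) ≤ f(j−1) for every j with 2 ≤ j ≤ m−1; i.e., f is non-increasing. -/

import Mathlib

/-- Lemma 1 of the paper: the function `f` is non-increasing on `{2, …, m-1}`. -/
theorem bonferroni_gatekeeping_lemma1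
    (m : ℕ) (hm : 3 ≤ m)
    (g : ℕ → ℕ → ℝ) (a astar : ℕ → ℝ) (n T : ℕ → ℕ) (f : ℕ → ℝ)
    (hg0 : ∀ i j, 0 ≤ g i j) (hg1 : ∀ i j, g i j ≤ 1)
    (hgdiag : ∀ i, g i i = 0)
    (hgrow : ∀ i ∈ Finset.Icc 1 m, ∑ j ∈ Finset.Icc 1 m, g i j = 1)
    (ha : ∀ i, 0 ≤ a i) (hn : ∀ i, 0 < n i) (hT : ∀ i, T i ≤ n i)
    (hstar : ∀ i ∈ Finset.Icc 1 m,
      astar i = a i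
        + ∑ j ∈ Finset.Icc 1 (i - 1), (1 - (T j : ℝ) / n j) * g j i * astar j
        + ∑ l ∈ Finset.Icc (i + 1) m, (1 - (T l : ℝ) / n l) * g l i * a l)
    (hf : ∀ j, f j =
      (∑ i ∈ Finset.Icc 1 j,
        ((T i : ℝ) / n i
          + (1 - (T i : ℝ) / n i) * ∑ l ∈ Finset.Icc (j + 1) m, g i l) * astar i)
      + ∑ l ∈ Finset.Icc (j + 1) m,
        ((T l : ℝ) / n l
          + (1 - (T l : ℝ) / n l) * ∑ i ∈ Finset.Icc (j + 1) m, g l i) * a l) :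
    ∀ j, 2 ≤ j → j ≤ m - 1 → f j ≤ f (j - 1) := by
  -- basic facts about c i = T i / n i
  have hc0 : ∀ i, (0:ℝ) ≤ (T i : ℝ) / n i := by
    intro i; positivity
  have hc1 : ∀ i, (T i : ℝ) / n i ≤ 1 := by
    intro i
    have hn' : (0:ℝ) < n i := by exact_mod_cast hn i
    rw [div_le_one hn']
    exact_mod_cast hT i
  have hd : ∀ i, (0:ℝ) ≤ 1 - (T i : ℝ) / n i := fun i => by linarith [hc1 i]
  -- nonnegativity of astar on Icc 1 m, by strong induction
  have hastar : ∀ i, i ∈ Finset.Icc 1 m → 0 ≤ astar i := by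
    intro i
    induction i using Nat.strong_induction_on with
    | _ i ih =>
      intro hi
      rw [hstar i hi]
      have hi' := Finset.mem_Icc.mp hi
      have h1 : 0 ≤ ∑ k ∈ Finset.Icc 1 (i - 1),
          (1 - (T k : ℝ) / n k) * g k i * astar k := by
        apply Finset.sum_nonneg
        intro k hk
        have hk' := Finset.mem_Icc.mp hk
        have hki : k < i := by omega
        have hkm : k ∈ Finset.Icc 1 m := Finset.mem_Icc.mpr ⟨hk'.1, by omega⟩
        exact mul_nonneg (mul_nonneg (hd k) (hg0 k i)) (ih k hki hkm)
      have h2 : 0 ≤ ∑ l ∈ Finset.Icc (i + 1) m,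
          (1 - (T l : ℝ) / n l) * g l i * a l := by
        apply Finset.sum_nonneg
        intro l _
        exact mul_nonneg (mul_nonneg (hd l) (hg0 l i)) (ha l)
      linarith [ha i]
  intro j hj2 hjm
  have hjm' : j ≤ m := by omega
  have hj1 : 1 ≤ j := by omega
  have hjj : j - 1 + 1 = j := by omega
  -- splitting lemmas
  have split_top : ∀ (F : ℕ → ℝ),
      ∑ i ∈ Finset.Icc 1 j, F i = (∑ i ∈ Finset.Icc 1 (j - 1), F i) + F j := by
    intro F
    conv_lhs => rw [← hjj]
    rw [Finset.sum_Icc_succ_top (by omega), hjj]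
  have split_bot : ∀ (F : ℕ → ℝ),
      ∑ l ∈ Finset.Icc j m, F l = F j + ∑ l ∈ Finset.Icc (j + 1) m, F l := by
    intro F
    rw [Finset.Icc_add_one_left_eq_Ioc, Finset.Icc_eq_cons_Ioc hjm', Finset.sum_cons]
  -- abbreviations (as plain terms, to match hstar)
  have hjmem : j ∈ Finset.Icc 1 m := Finset.mem_Icc.mpr ⟨hj1, hjm'⟩
  -- the inner-sum row bound
  have hSg0 : 0 ≤ ∑ l ∈ Finset.Icc (j + 1) m, g j l :=
    Finset.sum_nonneg fun l _ => hg0 j l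
  have hSg1 : ∑ l ∈ Finset.Icc (j + 1) m, g j l ≤ 1 := by
    rw [← hgrow j hjmem]
    apply Finset.sum_le_sum_of_subset_of_nonneg
    · intro x hx
      simp only [Finset.mem_Icc] at hx ⊢
      omega
    · intro x _ _
      exact hg0 j x
  -- rearrangement lemmas
  have e1 : (∑ i ∈ Finset.Icc 1 (j - 1),
        ((T i : ℝ) / n i + (1 - (T i : ℝ) / n i) * ∑ l ∈ Finset.Icc j m, g i l) * astar i)
      = (∑ i ∈ Finset.Icc 1 (j - 1),
        ((T i : ℝ) / n i + (1 - (T i : ℝ) / n i) * ∑ l ∈ Finset.Icc (j + 1) m, g i l) * astar i)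
      + ∑ i ∈ Finset.Icc 1 (j - 1), (1 - (T i : ℝ) / n i) * g i j * astar i := by
    rw [← Finset.sum_add_distrib]
    apply Finset.sum_congr rfl
    intro i _
    rw [split_bot (g i)]
    ring
  have e2 : (∑ l ∈ Finset.Icc (j + 1) m,
        ((T l : ℝ) / n l + (1 - (T l : ℝ) / n l) * ∑ i ∈ Finset.Icc j m, g l i) * a l)
      = (∑ l ∈ Finset.Icc (j + 1) m,
        ((T l : ℝ) / n l + (1 - (T l : ℝ) / n l) * ∑ i ∈ Finset.Icc (j + 1) m, g l i) * a l)
      + ∑ l ∈ Finset.Icc (j + 1) m, (1 - (T l : ℝ) / n l) * g l j * a l := by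
    rw [← Finset.sum_add_distrib]
    apply Finset.sum_congr rfl
    intro l _
    rw [split_bot (g l)]
    ring
  have e3 : ∑ i ∈ Finset.Icc j m, g j i = ∑ l ∈ Finset.Icc (j + 1) m, g j l := by
    rw [split_bot (g j), hgdiag j, zero_add]
  -- the key identity
  have key : f (j - 1) - f j
      = (1 - ((T j : ℝ) / n j
          + (1 - (T j : ℝ) / n j) * ∑ l ∈ Finset.Icc (j + 1) m, g j l))
        * ((∑ i ∈ Finset.Icc 1 (j - 1), (1 - (T i : ℝ) / n i) * g i j * astar i)
          + ∑ l ∈ Finset.Icc (j + 1) m, (1 - (T l : ℝ) / n l) * g l j * a l) := by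
    rw [hf (j - 1), hf j, hjj]
    rw [split_bot (fun l => ((T l : ℝ) / n l
        + (1 - (T l : ℝ) / n l) * ∑ i ∈ Finset.Icc j m, g l i) * a l)]
    rw [split_top (fun i => ((T i : ℝ) / n i
        + (1 - (T i : ℝ) / n i) * ∑ l ∈ Finset.Icc (j + 1) m, g i l) * astar i)]
    rw [e1, e2, e3, hstar j hjmem]
    ring
  -- nonnegativity pieces
  have hA0 : 0 ≤ ∑ i ∈ Finset.Icc 1 (j - 1), (1 - (T i : ℝ) / n i) * g i j * astar i := by
    apply Finset.sum_nonneg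
    intro i hi
    have hi' := Finset.mem_Icc.mp hi
    have him : i ∈ Finset.Icc 1 m := Finset.mem_Icc.mpr ⟨hi'.1, by omega⟩
    exact mul_nonneg (mul_nonneg (hd i) (hg0 i j)) (hastar i him)
  have hB0 : 0 ≤ ∑ l ∈ Finset.Icc (j + 1) m, (1 - (T l : ℝ) / n l) * g l j * a l := by
    apply Finset.sum_nonneg
    intro l _
    exact mul_nonneg (mul_nonneg (hd l) (hg0 l j)) (ha l)
  have hP : (T j : ℝ) / n j
      + (1 - (T j : ℝ) / n j) * ∑ l ∈ Finset.Icc (j + 1) m, g j l ≤ 1 := by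
    nlinarith [mul_le_mul_of_nonneg_left hSg1 (hd j)]
  nlinarith [key, hA0, hB0, hP, mul_nonneg (by linarith : (0:ℝ) ≤ 1 - ((T j : ℝ) / n j
      + (1 - (T j : ℝ) / n j) * ∑ l ∈ Finset.Icc (j + 1) m, g j l))
    (by linarith : (0:ℝ) ≤ (∑ i ∈ Finset.Icc 1 (j - 1), (1 - (T i : ℝ) / n i) * g i j * astar i)
      + ∑ l ∈ Finset.Icc (j + 1) m, (1 - (T l : ℝ) / n l) * g l j * a l)]
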